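/- For all x, y ∈ F, the commutator of u₂(x) and u₁(y) in GL₄(E) is given by u₂(x)·u₁(y)·u₂(x)⁻¹·u₁(y)⁻¹ = I₄ − s²xy·E₁₃ + s³xy²·E₁₄ + s²xy·E₂₄, i.e. it equals the matrix [[1, 0, −s²xy, s³xy²],[0, 1, 0, s²xy],[0, 0, 1, 0],[0, 0, 0, 1]]; in particular this commutator lies in the subgroup C. -/

import Mathlib

open Matrix
set_option synthInstance.maxHeartbeats 400000
set_option maxHeartbeats 1600000

/-- `n(u, x₁, x₂) = [[1,u,x₁,x₂],[0,1,0,−ι(x₁)],[0,0,1,−ι(u)],[0,0,0,1]]`. -/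
def nmat {E : Type*} [Field E] (ι : E →+* E) (u x₁ x₂ : E) :
    Matrix (Fin 4) (Fin 4) E :=
  !![1, u, x₁, x₂; 0, 1, 0, -ι x₁; 0, 0, 1, -ι u; 0, 0, 0, 1]

/-- `C = {n(u, x₁, x₂) ∈ N₁ : u ∈ F}`. -/
def Cset {E : Type*} [Field E] (ι : E →+* E) : Set (Matrix (Fin 4) (Fin 4) E) :=
  {m | ∃ u x₁ x₂ : E, ι u = u ∧ x₂ + ι x₂ + u * ι x₁ + x₁ * ι u = 0 ∧
    m = nmat ι u x₁ x₂}

/-- `u₂(x) = I₄ + s·x·E₂₃`. -/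
def u2mat {E : Type*} [Field E] (s x : E) : Matrix (Fin 4) (Fin 4) E :=
  1 + (s * x) • Matrix.single 1 2 1

/-- `u₁(y) = I₄ + s·y·(E₁₂ + E₃₄)`. -/
def u1mat {E : Type*} [Field E] (s y : E) : Matrix (Fin 4) (Fin 4) E :=
  1 + (s * y) • (Matrix.single 0 1 1 + Matrix.single 2 3 1)

lemma u2eq {E : Type*} [Field E] (s x : E) :
    u2mat s x = !![1,0,0,0;0,1,s*x,0;0,0,1,0;0,0,0,1] := by
  ext i j
  fin_cases i <;> fin_cases j <;>
    simp [u2mat, Matrix.single, Matrix.one_apply, Matrix.vecHead, Matrix.vecTail]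

lemma u1eq {E : Type*} [Field E] (s y : E) :
    u1mat s y = !![1,s*y,0,0;0,1,0,0;0,0,1,s*y;0,0,0,1] := by
  ext i j
  fin_cases i <;> fin_cases j <;>
    simp [u1mat, Matrix.single, Matrix.one_apply, Matrix.vecHead, Matrix.vecTail]

lemma u2inv {E : Type*} [Field E] (s x : E) :
    (u2mat s x)⁻¹ = u2mat s (-x) := by
  apply Matrix.inv_eq_right_inv
  rw [u2eq, u2eq]
  ext i j
  fin_cases i <;> fin_cases j <;>
    simp [Matrix.mul_apply, Fin.sum_univ_four, Matrix.one_apply, Matrix.vecHead, Matrix.vecTail, -mul_eq_zero] <;> ring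

lemma u1inv {E : Type*} [Field E] (s y : E) :
    (u1mat s y)⁻¹ = u1mat s (-y) := by
  apply Matrix.inv_eq_right_inv
  rw [u1eq, u1eq]
  ext i j
  fin_cases i <;> fin_cases j <;>
    simp [Matrix.mul_apply, Fin.sum_univ_four, Matrix.one_apply, Matrix.vecHead, Matrix.vecTail, -mul_eq_zero] <;> ring

lemma comm_eq {E : Type*} [Field E] (s x y : E) :
    u2mat s x * u1mat s y * (u2mat s x)⁻¹ * (u1mat s y)⁻¹
        = !![1, 0, -(s ^ 2 * x * y), s ^ 3 * x * y ^ 2;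
             0, 1, 0, s ^ 2 * x * y;
             0, 0, 1, 0;
             0, 0, 0, 1] := by
  rw [u2inv, u1inv, u2eq, u1eq, u2eq, u1eq]
  ext i j
  fin_cases i <;> fin_cases j <;>
    simp [Matrix.mul_apply, Fin.sum_univ_four, Matrix.vecHead, Matrix.vecTail, -mul_eq_zero] <;> ring

theorem statement12 {E : Type*} [Field E] (htwo : (2 : E) ≠ 0)
    (ι : E →+* E) (hinv : ∀ x, ι (ι x) = x) (hni : ι ≠ RingHom.id E)
    (s : E) (hs0 : s ≠ 0) (hss : ι s = -s)
    (x y : E) (hx : ι x = x) (hy : ι y = y) :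
    u2mat s x * u1mat s y * (u2mat s x)⁻¹ * (u1mat s y)⁻¹
        = (1 : Matrix (Fin 4) (Fin 4) E)
            + (-(s ^ 2 * x * y)) • Matrix.single 0 2 1
            + (s ^ 3 * x * y ^ 2) • Matrix.single 0 3 1
            + (s ^ 2 * x * y) • Matrix.single 1 3 1 ∧
    u2mat s x * u1mat s y * (u2mat s x)⁻¹ * (u1mat s y)⁻¹
        = !![1, 0, -(s ^ 2 * x * y), s ^ 3 * x * y ^ 2;
             0, 1, 0, s ^ 2 * x * y;
             0, 0, 1, 0;
             0, 0, 0, 1] ∧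
    u2mat s x * u1mat s y * (u2mat s x)⁻¹ * (u1mat s y)⁻¹ ∈ Cset ι := by
  have h := comm_eq (E := E) s x y
  refine ⟨?_, h, ?_⟩
  · rw [h]
    ext i j
    fin_cases i <;> fin_cases j <;>
      simp [Matrix.single, Matrix.one_apply, Matrix.vecHead, Matrix.vecTail]
  · refine ⟨0, -(s ^ 2 * x * y), s ^ 3 * x * y ^ 2, by simp, ?_, ?_⟩
    · simp only [_root_.map_mul, map_pow, hss, hx, hy, map_zero]
      ring
    · rw [h]
      unfold nmat
      ext i j
      fin_cases i <;> fin_cases j <;>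
        simp [_root_.map_mul, map_pow, hss, hx, hy, Matrix.vecHead, Matrix.vecTail, -mul_eq_zero] <;> ring
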